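/- Filtration theorem for HXPath=: let M be an abstract hybrid data model, Σ a closed set of node expressions, and M^f a filtration of M through Σ. Then (1) for every φ ∈ Σ and every point m, M^f,[m] ⊨ φ iff M,m ⊨ φ; and (2) for every path expression α with ⟨α⟩⊤ ∈ Σ and all points m,n: M^f,[m],[n] ⊨ α iff for every m' ∈ [m] there exists n' ∈ [n] with M,m',n' ⊨ α. -/

import Mathlib

mutual
inductive PExp (P N M E : Type) : Type
  | mod : M → PExp P N M E
  | at_ : N → PExp P N M E
  | test : NExp P N M E → PExp P N M E
  | comp : PExp P N M E → PExp P N M E → PExp P N M E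
  | union : PExp P N M E → PExp P N M E → PExp P N M E
inductive NExp (P N M E : Type) : Type
  | prop : P → NExp P N M E
  | nom : N → NExp P N M E
  | neg : NExp P N M E → NExp P N M E
  | conj : NExp P N M E → NExp P N M E → NExp P N M E
  | cmpEq : E → PExp P N M E → PExp P N M E → NExp P N M E
  | cmpNeq : E → PExp P N M E → PExp P N M E → NExp P N M E
end

/-- An abstract hybrid data model (the requirement that each `sim e` is an
equivalence relation is stated as a separate hypothesis where needed). -/
structure Model (P N M E : Type) where
  W : Type
  sim : E → W → W → Prop
  R : M → W → W → Prop
  V : W → P → Prop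
  nom : N → W

mutual
def psat {P N M E : Type} (𝔐 : Model P N M E) : PExp P N M E → 𝔐.W → 𝔐.W → Prop
  | .mod a, m, n => 𝔐.R a m n
  | .at_ i, _, n => 𝔐.nom i = n
  | .test φ, m, n => m = n ∧ nsat 𝔐 φ m
  | .comp α β, m, n => ∃ l, psat 𝔐 α m l ∧ psat 𝔐 β l n
  | .union α β, m, n => psat 𝔐 α m n ∨ psat 𝔐 β m n
def nsat {P N M E : Type} (𝔐 : Model P N M E) : NExp P N M E → 𝔐.W → Prop
  | .prop p, m => 𝔐.V m p
  | .nom i, m => 𝔐.nom i = m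
  | .neg φ, m => ¬ nsat 𝔐 φ m
  | .conj φ ψ, m => nsat 𝔐 φ m ∧ nsat 𝔐 ψ m
  | .cmpEq e α β, m => ∃ n l, psat 𝔐 α m n ∧ psat 𝔐 β m l ∧ 𝔐.sim e n l
  | .cmpNeq e α β, m => ∃ n l, psat 𝔐 α m n ∧ psat 𝔐 β m l ∧ ¬ 𝔐.sim e n l
end

variable {P N M E : Type}

/-- `⊤` defined from a given node expression: `¬(φ ∧ ¬φ)`. -/
def NExp.top (φ : NExp P N M E) : NExp P N M E := .neg (.conj φ (.neg φ))

/-- `⟨α⟩⊤`, with `⊤ := ¬(θ₀ ∧ ¬θ₀)` and equality symbol `e₀`. -/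
def dT (e₀ : E) (θ₀ : NExp P N M E) (α : PExp P N M E) : NExp P N M E :=
  .cmpEq e₀ (α.comp (.test (NExp.top θ₀))) (α.comp (.test (NExp.top θ₀)))

/-- A closed set of node expressions. -/
def ClosedSet (e₀ : E) (θ₀ : NExp P N M E) (Sg : Set (NExp P N M E)) : Prop :=
  (∀ φ, NExp.neg φ ∈ Sg → φ ∈ Sg) ∧
  (∀ φ ψ, NExp.conj φ ψ ∈ Sg → φ ∈ Sg ∧ ψ ∈ Sg) ∧
  (∀ e α β, NExp.cmpEq e α β ∈ Sg → dT e₀ θ₀ α ∈ Sg ∧ dT e₀ θ₀ β ∈ Sg) ∧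
  (∀ e α β, NExp.cmpNeq e α β ∈ Sg → dT e₀ θ₀ α ∈ Sg ∧ dT e₀ θ₀ β ∈ Sg) ∧
  (∀ φ, dT e₀ θ₀ (.test φ) ∈ Sg → φ ∈ Sg) ∧
  (∀ i, dT e₀ θ₀ (.at_ i) ∈ Sg → NExp.nom i ∈ Sg) ∧
  (∀ α β, dT e₀ θ₀ (.comp α β) ∈ Sg → dT e₀ θ₀ α ∈ Sg ∧ dT e₀ θ₀ β ∈ Sg) ∧
  (∀ α β, dT e₀ θ₀ (.union α β) ∈ Sg → dT e₀ θ₀ α ∈ Sg ∧ dT e₀ θ₀ β ∈ Sg)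

/-- `𝔐f` is a filtration of `𝔐` through `Sg`, presented via the quotient map
`f` sending each point to its class (`f m = [m]`). -/
structure IsFiltrationHX (𝔐 𝔐f : Model P N M E) (e₀ : E) (θ₀ : NExp P N M E)
    (Sg : Set (NExp P N M E)) (f : 𝔐.W → 𝔐f.W) : Prop where
  surj : Function.Surjective f
  resp : ∀ m n, f m = f n ↔ (∀ φ ∈ Sg, (nsat 𝔐 φ m ↔ nsat 𝔐 φ n))
  r1 : ∀ a m n, 𝔐.R a m n → 𝔐f.R a (f m) (f n)
  r2 : ∀ a m n, 𝔐f.R a (f m) (f n) → dT e₀ θ₀ (.mod a) ∈ Sg →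
        ∀ m', f m' = f m → ∃ n', f n' = f n ∧ 𝔐.R a m' n'
  simf : ∀ e m n, (𝔐f.sim e (f m) (f n) ↔ 𝔐.sim e m n)
  nomf : ∀ i, 𝔐f.nom i = f (𝔐.nom i)
  Vf : ∀ m p, (𝔐f.V (f m) p ↔ 𝔐.V m p)

mutual

theorem nclaim (𝔐 𝔐f : Model P N M E) (e₀ : E) (θ₀ : NExp P N M E)
    (Sg : Set (NExp P N M E)) (f : 𝔐.W → 𝔐f.W)
    (hc : ClosedSet e₀ θ₀ Sg) (hf : IsFiltrationHX 𝔐 𝔐f e₀ θ₀ Sg f) :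
    ∀ φ : NExp P N M E, φ ∈ Sg → ∀ m, (nsat 𝔐f φ (f m) ↔ nsat 𝔐 φ m)
  | .prop p, _, m => hf.Vf m p
  | .nom i, hφ, m => by
      simp only [nsat, hf.nomf]
      constructor
      · intro h
        exact ((hf.resp _ _).1 h _ hφ).1 rfl
      · intro h; rw [h]
  | .neg φ, hφ, m => by
      simp only [nsat]
      exact not_congr (nclaim 𝔐 𝔐f e₀ θ₀ Sg f hc hf φ (hc.1 φ hφ) m)
  | .conj φ ψ, hφψ, m => by
      simp only [nsat]
      exact and_congr
        (nclaim 𝔐 𝔐f e₀ θ₀ Sg f hc hf φ (hc.2.1 φ ψ hφψ).1 m)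
        (nclaim 𝔐 𝔐f e₀ θ₀ Sg f hc hf ψ (hc.2.1 φ ψ hφψ).2 m)
  | .cmpEq e α β, hφ, m => by
      have hα := (hc.2.2.1 e α β hφ).1
      have hβ := (hc.2.2.1 e α β hφ).2
      simp only [nsat]
      constructor
      · rintro ⟨n, l, hn, hl, hsim⟩
        obtain ⟨n0, rfl⟩ := hf.surj n
        obtain ⟨l0, rfl⟩ := hf.surj l
        obtain ⟨n', hn', han⟩ := pclaim 𝔐 𝔐f e₀ θ₀ Sg f hc hf α hα m n0 hn m rfl
        obtain ⟨l', hl', hbl⟩ := pclaim 𝔐 𝔐f e₀ θ₀ Sg f hc hf β hβ m l0 hl m rfl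
        refine ⟨n', l', han, hbl, (hf.simf e n' l').1 ?_⟩
        rw [hn', hl']; exact hsim
      · rintro ⟨n, l, han, hbl, hsim⟩
        exact ⟨f n, f l, pup 𝔐 𝔐f e₀ θ₀ Sg f hc hf α hα m n han,
          pup 𝔐 𝔐f e₀ θ₀ Sg f hc hf β hβ m l hbl, (hf.simf e n l).2 hsim⟩
  | .cmpNeq e α β, hφ, m => by
      have hα := (hc.2.2.2.1 e α β hφ).1
      have hβ := (hc.2.2.2.1 e α β hφ).2
      simp only [nsat]
      constructor
      · rintro ⟨n, l, hn, hl, hsim⟩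
        obtain ⟨n0, rfl⟩ := hf.surj n
        obtain ⟨l0, rfl⟩ := hf.surj l
        obtain ⟨n', hn', han⟩ := pclaim 𝔐 𝔐f e₀ θ₀ Sg f hc hf α hα m n0 hn m rfl
        obtain ⟨l', hl', hbl⟩ := pclaim 𝔐 𝔐f e₀ θ₀ Sg f hc hf β hβ m l0 hl m rfl
        refine ⟨n', l', han, hbl, fun hs => hsim ?_⟩
        rw [← hn', ← hl']; exact (hf.simf e n' l').2 hs
      · rintro ⟨n, l, han, hbl, hsim⟩
        exact ⟨f n, f l, pup 𝔐 𝔐f e₀ θ₀ Sg f hc hf α hα m n han,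
          pup 𝔐 𝔐f e₀ θ₀ Sg f hc hf β hβ m l hbl,
          fun hs => hsim ((hf.simf e n l).1 hs)⟩

theorem pclaim (𝔐 𝔐f : Model P N M E) (e₀ : E) (θ₀ : NExp P N M E)
    (Sg : Set (NExp P N M E)) (f : 𝔐.W → 𝔐f.W)
    (hc : ClosedSet e₀ θ₀ Sg) (hf : IsFiltrationHX 𝔐 𝔐f e₀ θ₀ Sg f) :
    ∀ α : PExp P N M E, dT e₀ θ₀ α ∈ Sg → ∀ m n, psat 𝔐f α (f m) (f n) →
      ∀ m', f m' = f m → ∃ n', f n' = f n ∧ psat 𝔐 α m' n'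
  | .mod a, hα, m, n, h, m', hm' => hf.r2 a m n h hα m' hm'
  | .at_ i, _, m, n, h, m', _ => by
      simp only [psat, hf.nomf] at h
      exact ⟨𝔐.nom i, h, rfl⟩
  | .test φ, hα, m, n, h, m', hm' => by
      obtain ⟨heq, hφm⟩ := h
      refine ⟨m', by rw [hm', heq], rfl, ?_⟩
      have := nclaim 𝔐 𝔐f e₀ θ₀ Sg f hc hf φ (hc.2.2.2.2.1 φ hα) m'
      rw [hm'] at this
      exact this.1 hφm
  | .comp α β, hαβ, m, n, h, m', hm' => by
      obtain ⟨l, hl1, hl2⟩ := h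
      obtain ⟨l0, rfl⟩ := hf.surj l
      obtain ⟨l', hl', hal⟩ := pclaim 𝔐 𝔐f e₀ θ₀ Sg f hc hf α
        (hc.2.2.2.2.2.2.1 α β hαβ).1 m l0 hl1 m' hm'
      obtain ⟨n', hn', hbn⟩ := pclaim 𝔐 𝔐f e₀ θ₀ Sg f hc hf β
        (hc.2.2.2.2.2.2.1 α β hαβ).2 l0 n hl2 l' hl'
      exact ⟨n', hn', l', hal, hbn⟩
  | .union α β, hαβ, m, n, h, m', hm' => by
      rcases h with h | h
      · obtain ⟨n', hn', ha⟩ := pclaim 𝔐 𝔐f e₀ θ₀ Sg f hc hf α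
          (hc.2.2.2.2.2.2.2 α β hαβ).1 m n h m' hm'
        exact ⟨n', hn', Or.inl ha⟩
      · obtain ⟨n', hn', hb⟩ := pclaim 𝔐 𝔐f e₀ θ₀ Sg f hc hf β
          (hc.2.2.2.2.2.2.2 α β hαβ).2 m n h m' hm'
        exact ⟨n', hn', Or.inr hb⟩

theorem pup (𝔐 𝔐f : Model P N M E) (e₀ : E) (θ₀ : NExp P N M E)
    (Sg : Set (NExp P N M E)) (f : 𝔐.W → 𝔐f.W)
    (hc : ClosedSet e₀ θ₀ Sg) (hf : IsFiltrationHX 𝔐 𝔐f e₀ θ₀ Sg f) :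
    ∀ α : PExp P N M E, dT e₀ θ₀ α ∈ Sg → ∀ m n, psat 𝔐 α m n →
      psat 𝔐f α (f m) (f n)
  | .mod a, _, m, n, h => hf.r1 a m n h
  | .at_ i, _, m, n, h => by
      simp only [psat, hf.nomf]; rw [h]
  | .test φ, hα, m, n, h => by
      obtain ⟨rfl, hφm⟩ := h
      exact ⟨rfl, (nclaim 𝔐 𝔐f e₀ θ₀ Sg f hc hf φ (hc.2.2.2.2.1 φ hα) m).2 hφm⟩
  | .comp α β, hαβ, m, n, h => by
      obtain ⟨l, h1, h2⟩ := h
      exact ⟨f l, pup 𝔐 𝔐f e₀ θ₀ Sg f hc hf α (hc.2.2.2.2.2.2.1 α β hαβ).1 m l h1,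
        pup 𝔐 𝔐f e₀ θ₀ Sg f hc hf β (hc.2.2.2.2.2.2.1 α β hαβ).2 l n h2⟩
  | .union α β, hαβ, m, n, h => by
      rcases h with h | h
      · exact Or.inl (pup 𝔐 𝔐f e₀ θ₀ Sg f hc hf α (hc.2.2.2.2.2.2.2 α β hαβ).1 m n h)
      · exact Or.inr (pup 𝔐 𝔐f e₀ θ₀ Sg f hc hf β (hc.2.2.2.2.2.2.2 α β hαβ).2 m n h)

end

/-- Filtration theorem: truth of formulas in a closed set `Sg` is preserved by
filtrations, and a path expression `α` with `⟨α⟩⊤ ∈ Sg` holds between classes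
`[m],[n]` iff every member of `[m]` has an `α`-successor in `[n]`. -/
theorem filtration_theorem (𝔐 𝔐f : Model P N M E) (e₀ : E) (θ₀ : NExp P N M E)
    (Sg : Set (NExp P N M E)) (f : 𝔐.W → 𝔐f.W)
    (hclosed : ClosedSet e₀ θ₀ Sg) (hfilt : IsFiltrationHX 𝔐 𝔐f e₀ θ₀ Sg f) :
    (∀ φ ∈ Sg, ∀ m, (nsat 𝔐f φ (f m) ↔ nsat 𝔐 φ m)) ∧
    (∀ α : PExp P N M E, dT e₀ θ₀ α ∈ Sg → ∀ m n,
      (psat 𝔐f α (f m) (f n) ↔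
        ∀ m', f m' = f m → ∃ n', f n' = f n ∧ psat 𝔐 α m' n')) := by
  refine ⟨fun φ hφ m => nclaim 𝔐 𝔐f e₀ θ₀ Sg f hclosed hfilt φ hφ m,
    fun α hα m n => ⟨fun h m' hm' => pclaim 𝔐 𝔐f e₀ θ₀ Sg f hclosed hfilt α hα m n h m' hm',
      fun h => ?_⟩⟩
  obtain ⟨n', hn', ha⟩ := h m rfl
  have := pup 𝔐 𝔐f e₀ θ₀ Sg f hclosed hfilt α hα m n' ha
  rwa [hn'] at this
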